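/- Let 𝒜 be an almost disjoint family on ω of size κ, where cf(κ) > ω. Then for every n ∈ ω there exists m > n such that both {x ∈ 𝒜 : m ∈ x} and {x ∈ 𝒜 : m ∉ x} have cardinality κ. -/

import Mathlib

open Set Cardinal

/-- An almost disjoint family on ω. -/
def ADFamily (𝒜 : Set (Set ℕ)) : Prop :=
  𝒜.Infinite ∧ (∀ A ∈ 𝒜, A.Infinite) ∧
    ∀ A ∈ 𝒜, ∀ B ∈ 𝒜, A ≠ B → (A ∩ B).Finite

/-- Remark 5: if 𝒜 is an AD family of size κ with cf(κ) > ω, then for every n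
there is m > n such that κ many members of 𝒜 contain m and κ many omit m. -/
theorem adFamily_splitting (κ : Cardinal) (hcf : Cardinal.aleph0 < κ.ord.cof)
    (𝒜 : Set (Set ℕ)) (h𝒜 : ADFamily 𝒜) (hcard : Cardinal.mk ↥𝒜 = κ) :
    ∀ n : ℕ, ∃ m : ℕ, m > n ∧
      Cardinal.mk ↥{x ∈ 𝒜 | m ∈ x} = κ ∧
      Cardinal.mk ↥{x ∈ 𝒜 | m ∉ x} = κ := by
  obtain ⟨hinf, hmem, had⟩ := h𝒜
  have hκlt : ℵ₀ < κ := hcf.trans_le (Ordinal.cof_ord_le κ)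
  have hκinf : ℵ₀ ≤ κ := hκlt.le
  have hub : ∀ s : Set (Set ℕ), s ⊆ 𝒜 → #↥s ≤ κ := fun s hs =>
    hcard ▸ mk_le_mk_of_subset hs
  -- Lemma A: for any n' there is m > n' with κ many sets containing m.
  have lemA : ∀ n' : ℕ, ∃ m : ℕ, m > n' ∧ #↥{x ∈ 𝒜 | m ∈ x} = κ := by
    intro n'
    have hex : ∀ x : ↥𝒜, ∃ b ∈ (x : Set ℕ), n' < b := fun x =>
      (hmem x x.2).exists_gt n'
    choose f hf1 hf2 using hex
    have h₂ : #ℕ < (#↥𝒜).ord.cof := by rw [mk_nat, hcard]; exact hcf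
    obtain ⟨m, hm⟩ := Cardinal.infinite_pigeonhole f (by rw [hcard]; exact hκinf) h₂
    rw [hcard] at hm
    have hne : (f ⁻¹' {m}).Nonempty := by
      rw [← Set.nonempty_coe_sort, ← Cardinal.mk_ne_zero_iff, hm]
      intro h
      exact (h ▸ hκlt).not_gt aleph0_pos
    obtain ⟨x, hx⟩ := hne
    have hmn : m > n' := hx ▸ hf2 x
    refine ⟨m, hmn, le_antisymm (hub _ (sep_subset _ _)) ?_⟩
    rw [← hm]
    have hmemx : ∀ p : ↥(f ⁻¹' {m}), m ∈ (p.1 : Set ℕ) := by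
      intro p
      have := hf1 p.1
      rwa [p.2] at this
    exact Cardinal.mk_le_of_injective
      (f := fun p : ↥(f ⁻¹' {m}) =>
        (⟨p.1.1, p.1.2, hmemx p⟩ : ↥{x ∈ 𝒜 | m ∈ x}))
      (fun p q h => by
        simp only [Subtype.mk.injEq] at h
        exact Subtype.ext (Subtype.ext h))
  -- Lemma B: the set of m omitted by fewer than κ members is finite.
  set T : Set ℕ := {m : ℕ | #↥{x ∈ 𝒜 | m ∉ x} < κ} with hTdef
  have hTfin : T.Finite := by
    by_contra hinfT
    let g : ℕ ↪ ↥T := Set.Infinite.natEmbedding T hinfT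
    set B : Set (Set ℕ) := ⋃ i : ℕ, {x ∈ 𝒜 | ((g i : ℕ)) ∉ x} with hBdef
    have hB : #↥B < κ := by
      refine mk_iUnion_le_sum_mk.trans_lt ((sum_le_mk_mul_iSup _).trans_lt
        (Cardinal.mul_lt_of_lt hκinf (by rw [mk_nat]; exact hκlt) ?_))
      refine Ordinal.iSup_lt ?_ ?_
      · rw [mk_nat]; exact hcf
      · intro i
        exact (g i).2
    have hCge : κ ≤ #↥(𝒜 \ B) := by
      by_contra hC
      push_neg at hC
      have hsub : 𝒜 ⊆ B ∪ (𝒜 \ B) := fun x hx => by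
        by_cases h : x ∈ B
        · exact Or.inl h
        · exact Or.inr ⟨hx, h⟩
      have : κ ≤ #↥(B ∪ (𝒜 \ B) : Set (Set ℕ)) := hcard ▸ mk_le_mk_of_subset hsub
      have := this.trans (mk_union_le _ _)
      exact this.not_gt (Cardinal.add_lt_of_lt hκinf hB hC)
    have hnt : Nontrivial ↥(𝒜 \ B) := by
      rw [← Cardinal.one_lt_iff_nontrivial]
      exact lt_of_lt_of_le (lt_of_lt_of_le one_lt_aleph0 hκinf) hCge
    obtain ⟨x, y, hxy⟩ := hnt
    have hcontain : ∀ z : ↥(𝒜 \ B), ∀ i : ℕ, ((g i : ℕ)) ∈ (z.1 : Set ℕ) := by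
      intro z i
      by_contra h
      exact z.2.2 (Set.mem_iUnion.2 ⟨i, z.2.1, h⟩)
    have hrange : Set.range (fun i : ℕ => ((g i : ℕ))) ⊆ x.1 ∩ y.1 := by
      rintro _ ⟨i, rfl⟩
      exact ⟨hcontain x i, hcontain y i⟩
    have hrinf : (Set.range (fun i : ℕ => ((g i : ℕ)))).Infinite :=
      Set.infinite_range_of_injective
        (fun a b h => g.injective (Subtype.ext h))
    have hfin : (x.1 ∩ y.1).Finite :=
      had x.1 x.2.1 y.1 y.2.1 (fun h => hxy (Subtype.ext h))
    exact (hrinf.mono hrange) hfin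
  -- Main argument
  intro n
  obtain ⟨N, hN⟩ := hTfin.bddAbove
  obtain ⟨m, hm1, hm2⟩ := lemA (max n N)
  refine ⟨m, lt_of_le_of_lt (le_max_left n N) hm1, hm2, ?_⟩
  have hmT : m ∉ T := fun h => ((hN h).trans (le_max_right n N)).not_gt hm1
  exact le_antisymm (hub _ (sep_subset _ _)) (not_lt.1 hmT)
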